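/- Let X ~ Beta(α, β) with α, β > 0 and let M₁ = E[X], M₂ = E[X·log(X/(1−X))], M₃ = E[log(X/(1−X))]. If X₁, X₂, … are i.i.d. copies of X and M̄₁, M̄₂, M̄₃ denote the corresponding sample means of X_i, X_i·log(X_i/(1−X_i)), log(X_i/(1−X_i)), then the estimators α̂_n = M̄₁/(M̄₂ − M̄₁M̄₃) and β̂_n = (1 − M̄₁)/(M̄₂ − M̄₁M̄₃) converge almost surely to α and β respectively. -/

import Mathlib

open MeasureTheory Real Filter

noncomputable def betaB (a b : ℝ) : ℝ := Real.Gamma a * Real.Gamma b / Real.Gamma (a + b)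

/-- digamma function ψ = Γ'/Γ -/
noncomputable def digamma (z : ℝ) : ℝ := deriv Real.Gamma z / Real.Gamma z

/-- Beta(a,b) probability density on (0,1). -/
noncomputable def betaPDF (a b x : ℝ) : ℝ := x ^ (a - 1) * (1 - x) ^ (b - 1) / betaB a b

/-- Expectation of `h(X)` for `X ~ Beta(a,b)`. -/
noncomputable def betaE (a b : ℝ) (h : ℝ → ℝ) : ℝ :=
  ∫ x in Set.Ioo (0:ℝ) 1, h x * betaPDF a b x

/-- Beta(a,b) measure on ℝ. -/
noncomputable def betaMeasure (a b : ℝ) : Measure ℝ :=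
  volume.withDensity (fun x => ENNReal.ofReal (Set.indicator (Set.Ioo (0:ℝ) 1) (betaPDF a b) x))

open Set

lemma betaIntegrableOn {a b : ℝ} (ha : 0 < a) (hb : 0 < b) :
    IntegrableOn (fun x : ℝ => x ^ (a - 1) * (1 - x) ^ (b - 1)) (Set.Ioo 0 1) := by
  have h := (Complex.betaIntegral_convergent (u := (a:ℂ)) (v := (b:ℂ)) (by simpa) (by simpa)).norm
  rw [intervalIntegrable_iff_integrableOn_Ioc_of_le zero_le_one] at h
  refine ((h.mono_set Ioo_subset_Ioc_self).congr_fun ?_ measurableSet_Ioo)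
  intro x hx
  have hx0 : (0:ℝ) ≤ x := hx.1.le
  have hx1 : (0:ℝ) ≤ 1 - x := by linarith [hx.2]
  have e1 : ((x:ℂ)) ^ ((a:ℂ) - 1) = ((x ^ (a-1) : ℝ) : ℂ) := by
    rw [Complex.ofReal_cpow hx0]; norm_num
  have e2 : ((1 - (x:ℂ))) ^ ((b:ℂ) - 1) = (((1-x) ^ (b-1) : ℝ) : ℂ) := by
    rw [Complex.ofReal_cpow hx1]; push_cast; norm_num
  simp only [e1, e2, ← Complex.ofReal_mul, Complex.norm_real]
  rw [Real.norm_eq_abs, abs_of_nonneg (mul_nonneg (Real.rpow_nonneg hx0 _) (Real.rpow_nonneg hx1 _))]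

lemma measurable_L : Measurable (fun x : ℝ => Real.log (x / (1 - x))) :=
  Real.measurable_log.comp (measurable_id.div (measurable_const.sub measurable_id))

lemma measurable_betaKernel (a b : ℝ) :
    Measurable (fun x : ℝ => x ^ (a - 1) * (1 - x) ^ (b - 1)) := by
  have h1 : Measurable (fun x : ℝ => x ^ (a - 1)) := by measurability
  have h2 : Measurable (fun x : ℝ => (1 - x) ^ (b - 1)) :=
    (by measurability : Measurable (fun y : ℝ => y ^ (b - 1))).comp
      (measurable_const.sub measurable_id)
  exact h1.mul h2

lemma log_abs_bound {a b x : ℝ} (ha : 0 < a) (hb : 0 < b) (hx : x ∈ Set.Ioo (0:ℝ) 1) :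
    |Real.log (x / (1 - x))| ≤ (2/a) * x ^ (-(a/2)) + (2/b) * (1-x) ^ (-(b/2)) := by
  obtain ⟨hx0, hx1⟩ := hx
  have h1x : 0 < 1 - x := by linarith
  rw [Real.log_div hx0.ne' h1x.ne']
  have key : ∀ c y : ℝ, 0 < c → 0 < y → y ≤ 1 → |Real.log y| ≤ (2/c) * y ^ (-(c/2)) := by
    intro c y hc hy0 hy1
    rw [abs_of_nonpos (Real.log_nonpos hy0.le hy1), ← Real.log_inv]
    calc Real.log y⁻¹ ≤ (y⁻¹) ^ (c/2) / (c/2) :=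
          Real.log_le_rpow_div (inv_nonneg.2 hy0.le) (by linarith)
      _ = (2/c) * y ^ (-(c/2)) := by
          rw [← Real.rpow_neg_one y, ← Real.rpow_mul hy0.le, div_eq_mul_inv, mul_comm]
          norm_num
  calc |Real.log x - Real.log (1-x)| ≤ |Real.log x| + |Real.log (1-x)| := abs_sub _ _
    _ ≤ (2/a) * x ^ (-(a/2)) + (2/b) * (1-x) ^ (-(b/2)) := by
        gcongr
        · exact key a x ha hx0 hx1.le
        · exact key b (1-x) hb h1x (by linarith)

lemma betaLogIntegrableOn {a b : ℝ} (ha : 0 < a) (hb : 0 < b) :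
    IntegrableOn (fun x : ℝ =>
      Real.log (x / (1 - x)) * (x ^ (a - 1) * (1 - x) ^ (b - 1))) (Set.Ioo 0 1) := by
  have hg : IntegrableOn (fun x : ℝ =>
      (2/a) * (x ^ (a/2 - 1) * (1 - x) ^ (b - 1))
       + (2/b) * (x ^ (a - 1) * (1 - x) ^ (b/2 - 1))) (Set.Ioo 0 1) :=
    ((betaIntegrableOn (half_pos ha) hb).const_mul _).add
      ((betaIntegrableOn ha (half_pos hb)).const_mul _)
  refine hg.mono' ((measurable_L.mul (measurable_betaKernel a b)).aestronglyMeasurable) ?_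
  refine (ae_restrict_iff' measurableSet_Ioo).2 (Filter.Eventually.of_forall fun x hx => ?_)
  obtain ⟨hx0, hx1⟩ := hx
  have h1x : 0 < 1 - x := by linarith
  have hp : 0 ≤ x ^ (a - 1) * (1 - x) ^ (b - 1) :=
    mul_nonneg (Real.rpow_nonneg hx0.le _) (Real.rpow_nonneg h1x.le _)
  rw [Real.norm_eq_abs, abs_mul, abs_of_nonneg hp]
  calc |Real.log (x / (1 - x))| * (x ^ (a - 1) * (1 - x) ^ (b - 1))
      ≤ ((2/a) * x ^ (-(a/2)) + (2/b) * (1-x) ^ (-(b/2))) * (x ^ (a - 1) * (1 - x) ^ (b - 1)) := by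
        gcongr; exact log_abs_bound ha hb ⟨hx0, hx1⟩
    _ = (2/a) * (x ^ (-(a/2)) * x ^ (a-1) * (1 - x) ^ (b - 1))
       + (2/b) * (x ^ (a - 1) * ((1-x) ^ (-(b/2)) * (1-x) ^ (b-1))) := by ring
    _ = (2/a) * (x ^ (a/2 - 1) * (1 - x) ^ (b - 1))
       + (2/b) * (x ^ (a - 1) * (1 - x) ^ (b/2 - 1)) := by
        rw [← Real.rpow_add hx0, ← Real.rpow_add h1x]
        ring_nf

lemma betaXLogIntegrableOn {a b : ℝ} (ha : 0 < a) (hb : 0 < b) :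
    IntegrableOn (fun x : ℝ =>
      x * Real.log (x / (1 - x)) * (x ^ (a - 1) * (1 - x) ^ (b - 1))) (Set.Ioo 0 1) := by
  refine Integrable.mono (betaLogIntegrableOn ha hb)
    ((measurable_id.mul measurable_L |>.mul (measurable_betaKernel a b)).aestronglyMeasurable) ?_
  refine (ae_restrict_iff' measurableSet_Ioo).2 (Filter.Eventually.of_forall fun x hx => ?_)
  obtain ⟨hx0, hx1⟩ := hx
  rw [Real.norm_eq_abs, Real.norm_eq_abs, abs_mul, abs_mul (Real.log _)]
  have hxle : |x| ≤ 1 := by rw [abs_of_pos hx0]; linarith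
  have h2 : (0:ℝ) ≤ |Real.log (x / (1 - x))| * |x ^ (a - 1) * (1 - x) ^ (b - 1)| :=
    mul_nonneg (abs_nonneg _) (abs_nonneg _)
  rw [abs_mul x]
  exact mul_le_mul_of_nonneg_right (mul_le_of_le_one_left (abs_nonneg _) hxle)
    (abs_nonneg (x ^ (a - 1) * (1 - x) ^ (b - 1)))

lemma tendsto_L_mul_kernel {a b : ℝ} (ha : 0 < a) (hb : 0 < b) :
    Tendsto (fun y : ℝ => Real.log (y / (1 - y)) * (y ^ a * (1 - y) ^ b))
      (nhdsWithin 0 (Set.Ioi 0)) (nhds 0) := by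
  have hev : ∀ᶠ y in nhdsWithin (0:ℝ) (Set.Ioi 0),
      Real.log (y / (1 - y)) * (y ^ a * (1 - y) ^ b)
        = Real.log y * y ^ a * (1 - y) ^ b - Real.log (1 - y) * y ^ a * (1 - y) ^ b := by
    filter_upwards [Ioo_mem_nhdsGT_of_mem (Set.left_mem_Ico.2 zero_lt_one)] with y hy
    rw [Real.log_div hy.1.ne' (by linarith [hy.2] : (1:ℝ) - y ≠ 0)]
    ring
  have h1 : Tendsto (fun y : ℝ => Real.log y * y ^ a * (1 - y) ^ b)
      (nhdsWithin 0 (Set.Ioi 0)) (nhds 0) := by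
    have hc : Tendsto (fun y : ℝ => (1 - y) ^ b) (nhdsWithin 0 (Set.Ioi 0)) (nhds ((1:ℝ) ^ b)) := by
      have : ContinuousAt (fun y : ℝ => (1 - y) ^ b) 0 :=
        ContinuousAt.rpow_const (continuous_const.sub continuous_id).continuousAt
          (Or.inl (by norm_num))
      simpa using this.continuousWithinAt.tendsto
    have := (tendsto_log_mul_rpow_nhdsGT_zero ha).mul hc
    simpa using this
  have h2 : Tendsto (fun y : ℝ => Real.log (1 - y) * y ^ a * (1 - y) ^ b)
      (nhdsWithin 0 (Set.Ioi 0)) (nhds 0) := by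
    have hc : ContinuousAt (fun y : ℝ => Real.log (1 - y) * y ^ a * (1 - y) ^ b) 0 := by
      refine ContinuousAt.mul (ContinuousAt.mul ?_ ?_) ?_
      · exact (Real.continuousAt_log (by norm_num)).comp
          (continuous_const.sub continuous_id).continuousAt
      · exact Real.continuousAt_rpow_const _ _ (Or.inr ha.le)
      · exact ContinuousAt.rpow_const (continuous_const.sub continuous_id).continuousAt
          (Or.inl (by norm_num))
    have := (hc.continuousWithinAt (s := Set.Ioi 0)).tendsto
    simpa [Real.zero_rpow ha.ne'] using this
  simpa using Tendsto.congr' (Filter.EventuallyEq.symm hev) (h1.sub h2)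

lemma betaIntegral_value {a b : ℝ} (ha : 0 < a) (hb : 0 < b) :
    ∫ x in Set.Ioo (0:ℝ) 1, x ^ (a - 1) * (1 - x) ^ (b - 1) = betaB a b := by
  have key := Complex.Gamma_mul_Gamma_eq_betaIntegral (s := (a:ℂ)) (t := (b:ℂ)) (by simpa) (by simpa)
  have heq : Complex.betaIntegral (a:ℂ) (b:ℂ)
      = ((∫ x in (0:ℝ)..1, x ^ (a - 1) * (1 - x) ^ (b - 1) : ℝ) : ℂ) := by
    rw [Complex.betaIntegral, ← intervalIntegral.integral_ofReal]
    refine intervalIntegral.integral_congr fun x hx => ?_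
    rw [Set.uIcc_of_le zero_le_one] at hx
    have hx0 : (0:ℝ) ≤ x := hx.1
    have hx1 : (0:ℝ) ≤ 1 - x := by linarith [hx.2]
    have e1 : ((x:ℂ)) ^ ((a:ℂ) - 1) = ((x ^ (a-1) : ℝ) : ℂ) := by
      rw [Complex.ofReal_cpow hx0]; norm_num
    have e2 : ((1 - (x:ℂ))) ^ ((b:ℂ) - 1) = (((1-x) ^ (b-1) : ℝ) : ℂ) := by
      rw [Complex.ofReal_cpow hx1]; push_cast; norm_num
    simp only [e1, e2, ← Complex.ofReal_mul]
  have hG : Complex.Gamma ((a:ℂ) + b) = ((Real.Gamma (a+b) : ℝ) : ℂ) := by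
    rw [← Complex.ofReal_add, Complex.Gamma_ofReal]
  rw [heq, hG, Complex.Gamma_ofReal, Complex.Gamma_ofReal, ← Complex.ofReal_mul,
    ← Complex.ofReal_mul] at key
  have key' : Real.Gamma a * Real.Gamma b
      = Real.Gamma (a+b) * ∫ x in (0:ℝ)..1, x ^ (a - 1) * (1 - x) ^ (b - 1) :=
    Complex.ofReal_injective key
  have hGpos : 0 < Real.Gamma (a + b) := Real.Gamma_pos_of_pos (by linarith)
  rw [intervalIntegral.integral_of_le zero_le_one, integral_Ioc_eq_integral_Ioo] at key'
  rw [betaB]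
  field_simp
  linarith [key']

lemma betaB_pos {a b : ℝ} (ha : 0 < a) (hb : 0 < b) : 0 < betaB a b :=
  div_pos (mul_pos (Real.Gamma_pos_of_pos ha) (Real.Gamma_pos_of_pos hb))
    (Real.Gamma_pos_of_pos (by linarith))

lemma measurable_betaPDF (a b : ℝ) : Measurable (betaPDF a b) :=
  (measurable_betaKernel a b).div_const _

lemma betaPDF_nonneg {a b x : ℝ} (ha : 0 < a) (hb : 0 < b) (hx : x ∈ Set.Ioo (0:ℝ) 1) :
    0 ≤ betaPDF a b x :=
  div_nonneg (mul_nonneg (Real.rpow_nonneg hx.1.le _)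
    (Real.rpow_nonneg (by linarith [hx.2] : (0:ℝ) ≤ 1 - x) _)) (betaB_pos ha hb).le

lemma indicator_nonneg' {a b : ℝ} (ha : 0 < a) (hb : 0 < b) (x : ℝ) :
    0 ≤ Set.indicator (Set.Ioo (0:ℝ) 1) (betaPDF a b) x := by
  by_cases hx : x ∈ Set.Ioo (0:ℝ) 1
  · rw [Set.indicator_of_mem hx]; exact betaPDF_nonneg ha hb hx
  · rw [Set.indicator_of_notMem hx]

lemma integrable_betaMeasure {a b : ℝ} (ha : 0 < a) (hb : 0 < b) {h : ℝ → ℝ}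
    (hm : Measurable h)
    (hi : IntegrableOn (fun x => h x * betaPDF a b x) (Set.Ioo (0:ℝ) 1)) :
    Integrable h (betaMeasure a b) := by
  rw [betaMeasure, integrable_withDensity_iff
    (Measurable.ennreal_ofReal ((measurable_betaPDF a b).indicator measurableSet_Ioo))
    (Filter.Eventually.of_forall fun x => ENNReal.ofReal_lt_top)]
  have : (fun x => h x * (ENNReal.ofReal (Set.indicator (Set.Ioo (0:ℝ) 1) (betaPDF a b) x)).toReal)
      = Set.indicator (Set.Ioo (0:ℝ) 1) (fun x => h x * betaPDF a b x) := by
    funext x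
    rw [ENNReal.toReal_ofReal (indicator_nonneg' ha hb x)]
    by_cases hx : x ∈ Set.Ioo (0:ℝ) 1
    · rw [Set.indicator_of_mem hx, Set.indicator_of_mem hx]
    · rw [Set.indicator_of_notMem hx, Set.indicator_of_notMem hx, mul_zero]
  rw [this, integrable_indicator_iff measurableSet_Ioo]
  exact hi

lemma integral_betaMeasure {a b : ℝ} (ha : 0 < a) (hb : 0 < b) (h : ℝ → ℝ) :
    ∫ x, h x ∂(betaMeasure a b) = ∫ x in Set.Ioo (0:ℝ) 1, h x * betaPDF a b x := by
  rw [betaMeasure]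
  have hd : Measurable (fun x => (Set.indicator (Set.Ioo (0:ℝ) 1) (betaPDF a b) x).toNNReal) :=
    ((measurable_betaPDF a b).indicator measurableSet_Ioo).real_toNNReal
  have : (fun x => ENNReal.ofReal (Set.indicator (Set.Ioo (0:ℝ) 1) (betaPDF a b) x))
      = (fun x => ((Set.indicator (Set.Ioo (0:ℝ) 1) (betaPDF a b) x).toNNReal : ENNReal)) := rfl
  rw [this, integral_withDensity_eq_integral_smul hd h]
  have : (fun x => (Set.indicator (Set.Ioo (0:ℝ) 1) (betaPDF a b) x).toNNReal • h x)
      = Set.indicator (Set.Ioo (0:ℝ) 1) (fun x => h x * betaPDF a b x) := by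
    funext x
    rw [NNReal.smul_def, Real.coe_toNNReal _ (indicator_nonneg' ha hb x)]
    by_cases hx : x ∈ Set.Ioo (0:ℝ) 1
    · rw [Set.indicator_of_mem hx, Set.indicator_of_mem hx, smul_eq_mul, mul_comm]
    · rw [Set.indicator_of_notMem hx, Set.indicator_of_notMem hx, smul_eq_mul, zero_mul]
  rw [this, integral_indicator measurableSet_Ioo]

lemma betaParts {a b : ℝ} (ha : 0 < a) (hb : 0 < b) :
    (∫ x in Set.Ioo (0:ℝ) 1, x ^ (a-1) * (1-x) ^ (b-1))
      + a * (∫ x in Set.Ioo (0:ℝ) 1, Real.log (x/(1-x)) * (x ^ (a-1) * (1-x) ^ (b-1)))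
      - (a+b) * (∫ x in Set.Ioo (0:ℝ) 1, x * Real.log (x/(1-x)) * (x ^ (a-1) * (1-x) ^ (b-1)))
      = 0 := by
  set ψ : ℝ → ℝ := fun x => x ^ (a-1) * (1-x) ^ (b-1)
      + a * (Real.log (x/(1-x)) * (x ^ (a-1) * (1-x) ^ (b-1)))
      - (a+b) * (x * Real.log (x/(1-x)) * (x ^ (a-1) * (1-x) ^ (b-1))) with hψ
  have hint : IntegrableOn ψ (Set.Ioo (0:ℝ) 1) :=
    ((betaIntegrableOn ha hb).add ((betaLogIntegrableOn ha hb).const_mul a)).sub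
      ((betaXLogIntegrableOn ha hb).const_mul (a+b))
  have hiv : IntervalIntegrable ψ volume 0 1 := by
    rw [intervalIntegrable_iff_integrableOn_Ioc_of_le zero_le_one,
      integrableOn_Ioc_iff_integrableOn_Ioo]
    exact hint
  set f : ℝ → ℝ := fun x => Real.log (x/(1-x)) * (x ^ a * (1-x) ^ b) with hf
  have hderiv : ∀ x ∈ Set.Ioo (0:ℝ) 1, HasDerivAt f (ψ x) x := by
    intro x hx
    obtain ⟨hx0, hx1⟩ := hx
    have h1x : 0 < 1 - x := by linarith
    have hsub : HasDerivAt (fun y : ℝ => 1 - y) (-1) x := by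
      simpa using (hasDerivAt_id x).const_sub 1
    have hL : HasDerivAt (fun y : ℝ => Real.log (y/(1-y))) (x⁻¹ + (1-x)⁻¹) x := by
      have l1 : HasDerivAt Real.log x⁻¹ x := Real.hasDerivAt_log hx0.ne'
      have l2 : HasDerivAt (fun y : ℝ => Real.log (1-y)) ((1-x)⁻¹ * (-1)) x :=
        (Real.hasDerivAt_log h1x.ne').comp x hsub
      have := l1.sub l2
      refine (HasDerivAt.congr_of_eventuallyEq (by convert this using 1; ring) ?_)
      filter_upwards [Ioo_mem_nhds hx0 hx1] with y hy
      rw [Real.log_div hy.1.ne' (by linarith [hy.2] : (1:ℝ) - y ≠ 0)]; rfl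
    have g1 : HasDerivAt (fun y : ℝ => y ^ a) (a * x ^ (a-1)) x := by
      simpa using Real.hasDerivAt_rpow_const (x := x) (p := a) (Or.inl hx0.ne')
    have g2 : HasDerivAt (fun y : ℝ => (1-y) ^ b) ((b * (1-x) ^ (b-1)) * (-1)) x :=
      (Real.hasDerivAt_rpow_const (x := 1-x) (p := b) (Or.inl h1x.ne')).comp x hsub
    have hg : HasDerivAt (fun y : ℝ => y ^ a * (1-y) ^ b)
        (a * x ^ (a-1) * (1-x) ^ b + x ^ a * ((b * (1-x) ^ (b-1)) * (-1))) x := g1.mul g2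
    have hfull := hL.mul hg
    have ea : x ^ a = x ^ (a-1) * x := by
      rw [← Real.rpow_add_one hx0.ne' (a-1)]; norm_num
    have eb : (1-x) ^ b = (1-x) ^ (b-1) * (1-x) := by
      rw [← Real.rpow_add_one h1x.ne' (b-1)]; norm_num
    refine hfull.congr_deriv ?_
    rw [hψ]
    simp only [ea, eb]
    field_simp
    ring
  have h0 : Tendsto f (nhdsWithin 0 (Set.Ioi 0)) (nhds 0) := tendsto_L_mul_kernel ha hb
  have h1 : Tendsto f (nhdsWithin 1 (Set.Iio 1)) (nhds 0) := by
    have hswap : Tendsto (fun x : ℝ => 1 - x) (nhdsWithin 1 (Set.Iio 1))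
        (nhdsWithin 0 (Set.Ioi 0)) := by
      apply tendsto_nhdsWithin_of_tendsto_nhds_of_eventually_within
      · have : Tendsto (fun x : ℝ => 1 - x) (nhds 1) (nhds ((1:ℝ) - 1)) :=
          tendsto_const_nhds.sub tendsto_id
        rw [sub_self] at this
        exact this.mono_left nhdsWithin_le_nhds
      · filter_upwards [self_mem_nhdsWithin] with y hy
        simp only [Set.mem_Iio] at hy
        simp only [Set.mem_Ioi]
        linarith
    have hcomp := ((tendsto_L_mul_kernel hb ha).comp hswap).neg
    rw [neg_zero] at hcomp
    refine Tendsto.congr' ?_ hcomp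
    filter_upwards [Ioo_mem_nhdsLT_of_mem (Set.right_mem_Ioc.2 zero_lt_one)] with x hx
    obtain ⟨hx0, hx1⟩ := hx
    have h1x : 0 < 1 - x := by linarith
    have e1 : (1:ℝ) - (1 - x) = x := by ring
    simp only [Function.comp, hf, e1, Real.log_div h1x.ne' hx0.ne',
      Real.log_div hx0.ne' h1x.ne']
    ring
  have key := intervalIntegral.integral_eq_sub_of_hasDerivAt_of_tendsto zero_lt_one hderiv hiv h0 h1
  rw [intervalIntegral.integral_of_le zero_le_one, integral_Ioc_eq_integral_Ioo, sub_zero] at key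
  have hAB : IntegrableOn (fun x : ℝ => x ^ (a-1) * (1-x) ^ (b-1)
      + a * (Real.log (x/(1-x)) * (x ^ (a-1) * (1-x) ^ (b-1)))) (Set.Ioo (0:ℝ) 1) :=
    (betaIntegrableOn ha hb).add ((betaLogIntegrableOn ha hb).const_mul a)
  have hC : IntegrableOn (fun x : ℝ =>
      (a+b) * (x * Real.log (x/(1-x)) * (x ^ (a-1) * (1-x) ^ (b-1)))) (Set.Ioo (0:ℝ) 1) :=
    (betaXLogIntegrableOn ha hb).const_mul (a+b)
  rw [← MeasureTheory.integral_const_mul, ← MeasureTheory.integral_const_mul,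
    ← integral_add (betaIntegrableOn ha hb) ((betaLogIntegrableOn ha hb).const_mul a),
    ← integral_sub hAB hC]
  exact key

lemma M1_value {a b : ℝ} (ha : 0 < a) (hb : 0 < b) :
    ∫ x in Set.Ioo (0:ℝ) 1, x * betaPDF a b x = a / (a + b) := by
  have he : ∫ x in Set.Ioo (0:ℝ) 1, x * betaPDF a b x
      = ∫ x in Set.Ioo (0:ℝ) 1, (x ^ (a + 1 - 1) * (1 - x) ^ (b - 1)) / betaB a b := by
    refine setIntegral_congr_fun measurableSet_Ioo fun x hx => ?_
    rw [betaPDF]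
    have : x ^ (a + 1 - 1) = x ^ (a - 1) * x := by
      rw [show a + 1 - 1 = (a - 1) + 1 by ring, Real.rpow_add_one hx.1.ne']
    rw [this]; ring
  rw [he, integral_div, betaIntegral_value (by linarith : (0:ℝ) < a + 1) hb]
  have g1 : Real.Gamma (a + 1) = a * Real.Gamma a := Real.Gamma_add_one ha.ne'
  have g2 : Real.Gamma (a + 1 + b) = (a + b) * Real.Gamma (a + b) := by
    rw [show a + 1 + b = (a + b) + 1 by ring, Real.Gamma_add_one (by positivity)]
  rw [betaB, betaB, g1, g2]
  have p1 := Real.Gamma_pos_of_pos ha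
  have p2 := Real.Gamma_pos_of_pos hb
  have p3 := Real.Gamma_pos_of_pos (show (0:ℝ) < a + b by linarith)
  field_simp

lemma key_moment_relation {a b : ℝ} (ha : 0 < a) (hb : 0 < b) :
    (∫ x in Set.Ioo (0:ℝ) 1, (x * Real.log (x/(1-x))) * betaPDF a b x)
      - (∫ x in Set.Ioo (0:ℝ) 1, x * betaPDF a b x)
        * (∫ x in Set.Ioo (0:ℝ) 1, Real.log (x/(1-x)) * betaPDF a b x)
      = 1 / (a + b) := by
  have hB := betaB_pos ha hb
  have e2 : ∫ x in Set.Ioo (0:ℝ) 1, (x * Real.log (x/(1-x))) * betaPDF a b x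
      = (∫ x in Set.Ioo (0:ℝ) 1, x * Real.log (x/(1-x)) * (x ^ (a-1) * (1-x) ^ (b-1))) / betaB a b := by
    rw [← integral_div]
    refine setIntegral_congr_fun measurableSet_Ioo fun x _ => ?_
    rw [betaPDF]; ring
  have e3 : ∫ x in Set.Ioo (0:ℝ) 1, Real.log (x/(1-x)) * betaPDF a b x
      = (∫ x in Set.Ioo (0:ℝ) 1, Real.log (x/(1-x)) * (x ^ (a-1) * (1-x) ^ (b-1))) / betaB a b := by
    rw [← integral_div]
    refine setIntegral_congr_fun measurableSet_Ioo fun x _ => ?_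
    rw [betaPDF]; ring
  have hparts := betaParts ha hb
  rw [betaIntegral_value ha hb] at hparts
  rw [e2, e3, M1_value ha hb]
  -- from hparts : betaB + a * I3 - (a+b) * I2 = 0
  set I2 := ∫ x in Set.Ioo (0:ℝ) 1, x * Real.log (x/(1-x)) * (x ^ (a-1) * (1-x) ^ (b-1))
  set I3 := ∫ x in Set.Ioo (0:ℝ) 1, Real.log (x/(1-x)) * (x ^ (a-1) * (1-x) ^ (b-1))
  have hab : (0:ℝ) < a + b := by linarith
  field_simp
  linear_combination (-1) * hparts

open ProbabilityTheory in
theorem tamae_estimators_strong_consistency (α β : ℝ) (hα : 0 < α) (hβ : 0 < β)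
    {Ω : Type*} [MeasureSpace Ω] [IsProbabilityMeasure (ℙ : Measure Ω)]
    (X : ℕ → Ω → ℝ) (hmeas : ∀ i, Measurable (X i))
    (hdist : ∀ i, Measure.map (X i) ℙ = _root_.betaMeasure α β)
    (hindep : iIndepFun X ℙ) :
    ∀ᵐ ω ∂ℙ,
      Tendsto (fun n : ℕ =>
          ((∑ i ∈ Finset.range n, X i ω) / n) /
            ((∑ i ∈ Finset.range n, X i ω * Real.log (X i ω / (1 - X i ω))) / n
              - ((∑ i ∈ Finset.range n, X i ω) / n)
                * ((∑ i ∈ Finset.range n, Real.log (X i ω / (1 - X i ω))) / n)))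
        atTop (nhds α) ∧
      Tendsto (fun n : ℕ =>
          (1 - (∑ i ∈ Finset.range n, X i ω) / n) /
            ((∑ i ∈ Finset.range n, X i ω * Real.log (X i ω / (1 - X i ω))) / n
              - ((∑ i ∈ Finset.range n, X i ω) / n)
                * ((∑ i ∈ Finset.range n, Real.log (X i ω / (1 - X i ω))) / n)))
        atTop (nhds β) := by
  -- the three test functions
  set h₁ : ℝ → ℝ := fun x => x with hh₁
  set h₂ : ℝ → ℝ := fun x => x * Real.log (x / (1 - x)) with hh₂
  set h₃ : ℝ → ℝ := fun x => Real.log (x / (1 - x)) with hh₃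
  have hm₁ : Measurable h₁ := measurable_id
  have hm₂ : Measurable h₂ := measurable_id.mul measurable_L
  have hm₃ : Measurable h₃ := measurable_L
  -- integrability w.r.t. betaMeasure
  have hi₁ : Integrable h₁ (_root_.betaMeasure α β) := by
    refine integrable_betaMeasure hα hβ hm₁ ?_
    have : (fun x : ℝ => h₁ x * _root_.betaPDF α β x)
        = fun x => (x * (x ^ (α-1) * (1-x) ^ (β-1))) / betaB α β := by
      funext x; rw [hh₁, _root_.betaPDF]; ring
    rw [this]
    exact (((betaIntegrableOn (by linarith : (0:ℝ) < α + 1) hβ).congr_fun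
      (fun x hx => by
        rw [show α + 1 - 1 = (α - 1) + 1 by ring, Real.rpow_add_one hx.1.ne']
        ring) measurableSet_Ioo)).div_const _
  have hi₂ : Integrable h₂ (_root_.betaMeasure α β) := by
    refine integrable_betaMeasure hα hβ hm₂ ?_
    have : (fun x : ℝ => h₂ x * _root_.betaPDF α β x)
        = fun x => (x * Real.log (x/(1-x)) * (x ^ (α-1) * (1-x) ^ (β-1))) / betaB α β := by
      funext x; rw [hh₂, _root_.betaPDF]; ring
    rw [this]
    exact (betaXLogIntegrableOn hα hβ).div_const _
  have hi₃ : Integrable h₃ (_root_.betaMeasure α β) := by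
    refine integrable_betaMeasure hα hβ hm₃ ?_
    have : (fun x : ℝ => h₃ x * _root_.betaPDF α β x)
        = fun x => (Real.log (x/(1-x)) * (x ^ (α-1) * (1-x) ^ (β-1))) / betaB α β := by
      funext x; rw [hh₃, _root_.betaPDF]; ring
    rw [this]
    exact (betaLogIntegrableOn hα hβ).div_const _
  -- strong law for each composed sequence
  have slln : ∀ h : ℝ → ℝ, Measurable h → Integrable h (_root_.betaMeasure α β) →
      ∀ᵐ ω ∂ℙ, Tendsto (fun n : ℕ => (∑ i ∈ Finset.range n, h (X i ω)) / n) atTop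
        (nhds (∫ x, h x ∂(_root_.betaMeasure α β))) := by
    intro h hm hi
    have hint : Integrable (fun ω => h (X 0 ω)) ℙ := by
      have : Integrable h (Measure.map (X 0) ℙ) := by rw [hdist 0]; exact hi
      exact (integrable_map_measure hm.aestronglyMeasurable
        (hmeas 0).aemeasurable).1 this
    have hpind : Pairwise (Function.onFun (IndepFun · · ℙ) fun i ω => h (X i ω)) := by
      intro i j hij
      exact (hindep.indepFun hij).comp hm hm
    have hident : ∀ i, IdentDistrib (fun ω => h (X i ω)) (fun ω => h (X 0 ω)) ℙ ℙ := by
      intro i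
      have base : IdentDistrib (X i) (X 0) ℙ ℙ :=
        ⟨(hmeas i).aemeasurable, (hmeas 0).aemeasurable, by rw [hdist i, hdist 0]⟩
      exact base.comp hm
    have := strong_law_ae_real (fun i ω => h (X i ω)) hint hpind hident
    have hEeq : ∫ ω, h (X 0 ω) ∂ℙ = ∫ x, h x ∂(_root_.betaMeasure α β) := by
      rw [← hdist 0, integral_map (hmeas 0).aemeasurable hm.aestronglyMeasurable]
    rw [hEeq] at this
    exact this
  filter_upwards [slln h₁ hm₁ hi₁, slln h₂ hm₂ hi₂, slln h₃ hm₃ hi₃] with ω t1 t2 t3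
  -- the limit values
  set M1 := ∫ x, h₁ x ∂(_root_.betaMeasure α β) with hM1
  set M2 := ∫ x, h₂ x ∂(_root_.betaMeasure α β) with hM2
  set M3 := ∫ x, h₃ x ∂(_root_.betaMeasure α β) with hM3
  have vM1 : M1 = α / (α + β) := by
    rw [hM1, integral_betaMeasure hα hβ]; exact M1_value hα hβ
  have vD : M2 - M1 * M3 = 1 / (α + β) := by
    rw [hM1, hM2, hM3, integral_betaMeasure hα hβ, integral_betaMeasure hα hβ,
      integral_betaMeasure hα hβ]
    exact key_moment_relation hα hβ
  have hab : (0:ℝ) < α + β := by linarith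
  have hDne : M2 - M1 * M3 ≠ 0 := by rw [vD]; positivity
  have tden : Tendsto (fun n : ℕ =>
      (∑ i ∈ Finset.range n, X i ω * Real.log (X i ω / (1 - X i ω))) / n
        - ((∑ i ∈ Finset.range n, X i ω) / n)
          * ((∑ i ∈ Finset.range n, Real.log (X i ω / (1 - X i ω))) / n))
      atTop (nhds (M2 - M1 * M3)) := t2.sub (t1.mul t3)
  constructor
  · have := Tendsto.div t1 tden hDne
    have hval : M1 / (M2 - M1 * M3) = α := by
      rw [vD, vM1]; field_simp
    rw [hval] at this
    exact this
  · have tnum : Tendsto (fun n : ℕ => 1 - (∑ i ∈ Finset.range n, X i ω) / n)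
        atTop (nhds (1 - M1)) := tendsto_const_nhds.sub t1
    have := Tendsto.div tnum tden hDne
    have hval : (1 - M1) / (M2 - M1 * M3) = β := by
      rw [vD, vM1]; field_simp; ring
    rw [hval] at this
    exact this
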